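/- Under the same setup, combining bounds yields the global sensitivity estimate: ‖(1/N)S(X−X′)‖²_CM ≤ (τ²/(N²φ^{1/η}))·((2η−1)^{2−1/η}/η²) ≤ 4τ²/(N²φ^{1/η}). -/

import Mathlib

open Real

lemma key_bound {η φ lam : ℝ} (hη : 1 ≤ η) (hφ : 0 < φ) (hl : 0 < lam) :
    lam⁻¹ * (lam ^ η / (lam ^ η + φ)) ^ 2
      ≤ (2 * η - 1) ^ (2 - 1 / η) / η ^ 2 / φ ^ (1 / η) / 4 := by
  have hη0 : 0 < η := lt_of_lt_of_le one_pos hη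
  have h2η : 0 < 2 * η := by linarith
  have hb : 0 < 2 * η - 1 := by linarith
  set t := lam ^ η with htdef
  have ht : 0 < t := Real.rpow_pos_of_pos hl η
  set θ := (2 * η - 1) / (2 * η) with hθdef
  have hθ : 0 < θ := div_pos hb h2η
  have h1θ : 1 - θ = 1 / (2 * η) := by rw [hθdef]; field_simp; ring
  have h1θ' : 0 < 1 - θ := by rw [h1θ]; positivity
  have amgm := Real.geom_mean_le_arith_mean2_weighted hθ.le h1θ'.le
    (div_pos ht hθ).le (div_pos hφ h1θ').le (by ring)
  have hsum : θ * (t / θ) + (1 - θ) * (φ / (1 - θ)) = t + φ := by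
    rw [mul_div_cancel₀ _ hθ.ne', mul_div_cancel₀ _ h1θ'.ne']
  rw [hsum] at amgm
  have htφ : 0 < t + φ := by positivity
  have hsq : (t / θ) ^ (2 - 1 / η) * (φ / (1 - θ)) ^ (1 / η) ≤ (t + φ) ^ 2 := by
    have h := pow_le_pow_left₀ (by positivity) amgm 2
    have e1 : 2 * θ = 2 - 1 / η := by rw [hθdef]; field_simp
    have e2 : 2 * (1 - θ) = 1 / η := by rw [h1θ]; field_simp
    calc (t / θ) ^ (2 - 1/η) * (φ / (1 - θ)) ^ (1/η)
        = ((t / θ) ^ θ * (φ / (1 - θ)) ^ (1 - θ)) ^ 2 := by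
          rw [mul_pow, ← Real.rpow_natCast ((t/θ)^θ) 2, ← Real.rpow_natCast ((φ/(1-θ))^(1-θ)) 2,
            ← Real.rpow_mul (by positivity), ← Real.rpow_mul (by positivity)]
          rw [show (θ * (2:ℕ) : ℝ) = 2 - 1/η by push_cast; linarith [e1],
            show ((1-θ) * (2:ℕ) : ℝ) = 1/η by push_cast; linarith [e2]]
      _ ≤ (t + φ) ^ 2 := h
  have h4 : (2*η)^(2-1/η) * (2*η)^(1/η) = 4*η^2 := by
    rw [← Real.rpow_add h2η, show (2:ℝ) - 1/η + 1/η = 2 by ring,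
      show (2:ℝ) = ((2:ℕ):ℝ) by norm_num, Real.rpow_natCast]
    ring
  have hta : lam⁻¹ * t ^ 2 = t ^ (2 - 1/η) := by
    have hlt : t ^ (1/η) = lam := by
      rw [htdef, ← Real.rpow_mul hl.le, mul_one_div, div_self hη0.ne', Real.rpow_one]
    have h1 : lam⁻¹ = t ^ (-(1/η)) := by rw [Real.rpow_neg ht.le, hlt]
    rw [h1, ← Real.rpow_natCast t 2, ← Real.rpow_add ht]
    congr 1; push_cast; ring
  rw [hθdef, h1θ, Real.div_rpow ht.le hθ.le, Real.div_rpow hφ.le (by positivity),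
    Real.div_rpow hb.le h2η.le, Real.div_rpow (by norm_num) h2η.le, Real.one_rpow] at hsq
  set A := (2*η-1)^(2-1/η) with hAdef
  set P := φ^(1/η) with hPdef
  set T2 := (2*η)^(2-1/η) with hT2def
  set T1 := (2*η)^(1/η) with hT1def
  set ta := t^(2-1/η) with htadef
  have hA : (0:ℝ) < A := rpow_pos_of_pos hb _
  have hP : (0:ℝ) < P := rpow_pos_of_pos hφ _
  have hT2 : (0:ℝ) < T2 := rpow_pos_of_pos h2η _
  have hT1 : (0:ℝ) < T1 := rpow_pos_of_pos h2η _
  have hMpos : (0:ℝ) < A/η^2/P/4 := by positivity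
  have hata : 0 < ta := rpow_pos_of_pos ht _
  have heq : (A/η^2/P/4) * (ta/(A/T2) * (P/(1/T1))) = ta := by
    field_simp
    linear_combination h4
  calc lam⁻¹ * (t / (t + φ)) ^ 2 = lam⁻¹ * t ^ 2 / (t + φ) ^ 2 := by
        rw [div_pow]; ring
    _ ≤ A/η^2/P/4 := by
        rw [div_le_iff₀ (by positivity), hta, ← heq]
        exact mul_le_mul_of_nonneg_left hsq hMpos.le

theorem stmt11 {H : Type*} [NormedAddCommGroup H] [InnerProductSpace ℝ H]
    (v : ℕ → H) (hv : Orthonormal ℝ v) (lam : ℕ → ℝ) (hlam : ∀ j, 0 < lam j)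
    (η φ τ : ℝ) (hη : 1 ≤ η) (hφ : 0 < φ) (hτ : 0 < τ)
    (N : ℕ) (hN : 0 < N)
    (X X' : H) (hX : ‖X‖ ≤ τ) (hX' : ‖X'‖ ≤ τ) :
    (∑' j, (lam j)⁻¹ *
        ((N : ℝ)⁻¹ * ((lam j) ^ η / ((lam j) ^ η + φ)) * (inner ℝ (X - X') (v j) : ℝ)) ^ 2
      ≤ τ ^ 2 / ((N : ℝ) ^ 2 * φ ^ (1 / η)) * ((2 * η - 1) ^ (2 - 1 / η) / η ^ 2)) ∧
    τ ^ 2 / ((N : ℝ) ^ 2 * φ ^ (1 / η)) * ((2 * η - 1) ^ (2 - 1 / η) / η ^ 2)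
      ≤ 4 * τ ^ 2 / ((N : ℝ) ^ 2 * φ ^ (1 / η)) := by
  have hη0 : 0 < η := lt_of_lt_of_le one_pos hη
  have hb : 0 < 2 * η - 1 := by linarith
  have hP : (0:ℝ) < φ ^ (1/η) := rpow_pos_of_pos hφ _
  have hA : (0:ℝ) < (2*η-1) ^ (2-1/η) := rpow_pos_of_pos hb _
  have hNpos : (0:ℝ) < (N:ℝ) := by exact_mod_cast hN
  constructor
  · set x := X - X' with hxdef
    have hxn : ‖x‖ ≤ 2 * τ := by
      calc ‖X - X'‖ ≤ ‖X‖ + ‖X'‖ := norm_sub_le _ _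
        _ ≤ 2 * τ := by linarith
    have hbsum : Summable fun j => (inner ℝ x (v j) : ℝ) ^ 2 := by
      have := hv.inner_products_summable (x := x)
      simpa [real_inner_comm, sq_abs, Real.norm_eq_abs] using this
    have hbessel : ∑' j, (inner ℝ x (v j) : ℝ) ^ 2 ≤ ‖x‖ ^ 2 := by
      have := hv.tsum_inner_products_le x
      simpa [real_inner_comm, sq_abs, Real.norm_eq_abs] using this
    set K := (2*η-1)^(2-1/η)/η^2/φ^(1/η)/4 with hKdef
    have hK : 0 < K := by rw [hKdef]; positivity
    have hterm : ∀ j, (lam j)⁻¹ *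
        ((N : ℝ)⁻¹ * ((lam j) ^ η / ((lam j) ^ η + φ)) * (inner ℝ x (v j) : ℝ)) ^ 2
        ≤ ((N:ℝ)⁻¹ ^ 2 * K) * (inner ℝ x (v j) : ℝ) ^ 2 := by
      intro j
      have h := key_bound hη hφ (hlam j)
      calc (lam j)⁻¹ *
          ((N : ℝ)⁻¹ * ((lam j) ^ η / ((lam j) ^ η + φ)) * (inner ℝ x (v j) : ℝ)) ^ 2
          = ((lam j)⁻¹ * ((lam j) ^ η / ((lam j) ^ η + φ)) ^ 2) *
            ((N:ℝ)⁻¹ ^ 2 * (inner ℝ x (v j) : ℝ) ^ 2) := by ring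
        _ ≤ K * ((N:ℝ)⁻¹ ^ 2 * (inner ℝ x (v j) : ℝ) ^ 2) :=
            mul_le_mul_of_nonneg_right h (by positivity)
        _ = ((N:ℝ)⁻¹ ^ 2 * K) * (inner ℝ x (v j) : ℝ) ^ 2 := by ring
    have hS2 : Summable fun j => ((N:ℝ)⁻¹ ^ 2 * K) * (inner ℝ x (v j) : ℝ) ^ 2 :=
      hbsum.mul_left _
    have hS1 : Summable fun j => (lam j)⁻¹ *
        ((N : ℝ)⁻¹ * ((lam j) ^ η / ((lam j) ^ η + φ)) * (inner ℝ x (v j) : ℝ)) ^ 2 := by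
      refine Summable.of_nonneg_of_le (fun j => ?_) hterm hS2
      have := hlam j
      positivity
    have hle := Summable.tsum_le_tsum hterm hS1 hS2
    rw [tsum_mul_left] at hle
    have hx2 : ‖x‖ ^ 2 ≤ (2*τ) ^ 2 := pow_le_pow_left₀ (norm_nonneg x) hxn 2
    calc (∑' j, (lam j)⁻¹ *
          ((N : ℝ)⁻¹ * ((lam j) ^ η / ((lam j) ^ η + φ)) * (inner ℝ x (v j) : ℝ)) ^ 2)
        ≤ ((N:ℝ)⁻¹ ^ 2 * K) * ∑' j, (inner ℝ x (v j) : ℝ) ^ 2 := hle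
      _ ≤ ((N:ℝ)⁻¹ ^ 2 * K) * (2*τ)^2 :=
          mul_le_mul_of_nonneg_left (hbessel.trans hx2) (by positivity)
      _ = τ ^ 2 / ((N : ℝ) ^ 2 * φ ^ (1 / η)) * ((2 * η - 1) ^ (2 - 1 / η) / η ^ 2) := by
          rw [hKdef]
          set A := (2*η-1)^(2-1/η)
          set P := φ^(1/η)
          field_simp
          ring
  · have hb1 : (1:ℝ) ≤ 2 * η - 1 := by linarith
    have h1 : (2*η-1) ^ (2-1/η) ≤ (2*η-1) ^ (2:ℝ) :=
      Real.rpow_le_rpow_of_exponent_le hb1 (by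
        have : 0 < 1/η := by positivity
        linarith)
    have h2 : (2*η-1) ^ (2:ℝ) = (2*η-1) ^ (2:ℕ) := by
      rw [← Real.rpow_natCast]; norm_num
    have h3 : (2*η-1) ^ (2-1/η) / η ^ 2 ≤ 4 := by
      rw [div_le_iff₀ (by positivity)]
      calc (2*η-1) ^ (2-1/η) ≤ (2*η-1) ^ (2:ℕ) := h2 ▸ h1
        _ ≤ 4 * η ^ 2 := by nlinarith
    have hD : (0:ℝ) ≤ τ ^ 2 / ((N : ℝ) ^ 2 * φ ^ (1 / η)) := by positivity
    calc τ ^ 2 / ((N : ℝ) ^ 2 * φ ^ (1 / η)) * ((2 * η - 1) ^ (2 - 1 / η) / η ^ 2)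
        ≤ τ ^ 2 / ((N : ℝ) ^ 2 * φ ^ (1 / η)) * 4 := mul_le_mul_of_nonneg_left h3 hD
      _ = 4 * τ ^ 2 / ((N : ℝ) ^ 2 * φ ^ (1 / η)) := by ring
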